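/- There exists a nondecreasing function g : [0,∞) → [0,1] such that for every ℓ ≥ 0 and every q ≥ 0: ∫_0^ℓ e^{−θ} g(θ) dθ + (1 − g(ℓ)) · ∫_0^∞ e^{−θ} ( min{q, θ} − (ℓ − θ)^+ )^+ dθ ≥ 2(1 − ln 2) · (1 − e^{−q}). -/

import Mathlib

open MeasureTheory Real

noncomputable def gf (x : ℝ) : ℝ :=
  2 * (2 * Real.exp (x / 2) - 1) *
    (Real.log 2 + x / 2 - Real.log (2 * Real.exp (x / 2) - 1)) - 1

noncomputable def Phi (x : ℝ) : ℝ :=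
  2 * (1 - Real.log 2) - (1 - gf x) * (2 * Real.exp (-(x / 2)) - Real.exp (-x))

lemma one_le_e {x : ℝ} (hx : 0 ≤ x) : (1:ℝ) ≤ Real.exp (x / 2) := by
  have := Real.exp_le_exp.2 (by linarith : (0:ℝ) ≤ x / 2)
  simpa using this

lemma v_pos {x : ℝ} (hx : 0 ≤ x) : (0:ℝ) < 2 * Real.exp (x / 2) - 1 := by
  have := one_le_e hx; linarith

lemma gf_hasDeriv {x : ℝ} (hx : 0 ≤ x) :
    HasDerivAt gf
      (2 * Real.exp (x / 2) *
        (Real.log 2 + x / 2 - Real.log (2 * Real.exp (x / 2) - 1)) - 1) x := by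
  have hv := v_pos hx
  have h1 : HasDerivAt (fun x : ℝ => Real.exp (x / 2)) (Real.exp (x / 2) * (1 / 2)) x :=
    ((hasDerivAt_id x).div_const 2).exp
  have h2 : HasDerivAt (fun x : ℝ => 2 * Real.exp (x / 2) - 1)
      (2 * (Real.exp (x / 2) * (1 / 2))) x := (h1.const_mul 2).sub_const 1
  have h3 : HasDerivAt (fun x : ℝ => Real.log (2 * Real.exp (x / 2) - 1))
      (2 * (Real.exp (x / 2) * (1 / 2)) / (2 * Real.exp (x / 2) - 1)) x :=
    h2.log (ne_of_gt hv)
  have h4 : HasDerivAt (fun x : ℝ => Real.log 2 + x / 2 - Real.log (2 * Real.exp (x / 2) - 1))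
      (1 / 2 - 2 * (Real.exp (x / 2) * (1 / 2)) / (2 * Real.exp (x / 2) - 1)) x :=
    (((hasDerivAt_id x).div_const 2).const_add (Real.log 2)).sub h3
  have h5 := ((h2.const_mul 2).mul h4).sub_const 1
  convert h5 using 1
  · rfl
  · rfl
  · rfl
  field_simp
  ring

lemma log_v {x : ℝ} :
    Real.log (2 * Real.exp (x / 2)) = Real.log 2 + x / 2 := by
  rw [Real.log_mul two_ne_zero (Real.exp_ne_zero _), Real.log_exp]

lemma gf_deriv_nonneg {x : ℝ} (hx : 0 ≤ x) :
    0 ≤ 2 * Real.exp (x / 2) *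
        (Real.log 2 + x / 2 - Real.log (2 * Real.exp (x / 2) - 1)) - 1 := by
  have hv := v_pos hx
  have he := Real.exp_pos (x / 2)
  have h1 : Real.log ((2 * Real.exp (x / 2) - 1) / (2 * Real.exp (x / 2)))
      ≤ (2 * Real.exp (x / 2) - 1) / (2 * Real.exp (x / 2)) - 1 :=
    Real.log_le_sub_one_of_pos (by positivity)
  rw [Real.log_div (ne_of_gt hv) (by positivity), log_v] at h1
  have h2 : (2 * Real.exp (x / 2) - 1) / (2 * Real.exp (x / 2)) - 1
      = -(1 / (2 * Real.exp (x / 2))) := by field_simp; ring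
  rw [h2] at h1
  have h3 : 1 / (2 * Real.exp (x / 2)) ≤
      Real.log 2 + x / 2 - Real.log (2 * Real.exp (x / 2) - 1) := by linarith
  have h4 : 2 * Real.exp (x / 2) * (1 / (2 * Real.exp (x / 2))) = 1 := by field_simp
  nlinarith [mul_le_mul_of_nonneg_left h3 (by positivity : (0:ℝ) ≤ 2 * Real.exp (x / 2))]

lemma gf_mono : MonotoneOn gf (Set.Ici 0) := by
  apply monotoneOn_of_deriv_nonneg (convex_Ici 0)
  · exact fun x hx => (gf_hasDeriv hx).continuousAt.continuousWithinAt
  · intro x hx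
    rw [interior_Ici] at hx
    exact (gf_hasDeriv (le_of_lt hx)).differentiableAt.differentiableWithinAt
  · intro x hx
    rw [interior_Ici] at hx
    rw [(gf_hasDeriv (le_of_lt hx)).deriv]
    exact gf_deriv_nonneg (le_of_lt hx)

lemma gf_zero : gf 0 = 2 * Real.log 2 - 1 := by
  simp [gf]
  norm_num

lemma gf_le_one {x : ℝ} (hx : 0 ≤ x) : gf x ≤ 1 := by
  have hv := v_pos hx
  have h1 : Real.log (2 * Real.exp (x / 2) / (2 * Real.exp (x / 2) - 1))
      ≤ 2 * Real.exp (x / 2) / (2 * Real.exp (x / 2) - 1) - 1 :=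
    Real.log_le_sub_one_of_pos (by positivity)
  rw [Real.log_div (by positivity) (ne_of_gt hv), log_v] at h1
  have h2 : 2 * Real.exp (x / 2) / (2 * Real.exp (x / 2) - 1) - 1
      = 1 / (2 * Real.exp (x / 2) - 1) := by field_simp; ring
  rw [h2] at h1
  have h4 : (2 * Real.exp (x / 2) - 1) * (1 / (2 * Real.exp (x / 2) - 1)) = 1 := by
    field_simp
  unfold gf
  nlinarith [mul_le_mul_of_nonneg_left h1 (le_of_lt hv)]

lemma gf_lower {x : ℝ} (hx : 0 ≤ x) : 2 * Real.log 2 - 1 ≤ gf x := by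
  have h0 : gf 0 ≤ gf x := gf_mono (le_refl (0:ℝ)) hx hx
  rwa [gf_zero] at h0

lemma gf_mem {x : ℝ} (hx : 0 ≤ x) : gf x ∈ Set.Icc (0:ℝ) 1 := by
  refine ⟨?_, gf_le_one hx⟩
  have h0 := gf_lower hx
  have := Real.log_two_gt_d9
  linarith

lemma Phi_hasDeriv {x : ℝ} (hx : 0 ≤ x) :
    HasDerivAt Phi (Real.exp (-x) * gf x) x := by
  have hg := gf_hasDeriv hx
  have hb : HasDerivAt (fun x : ℝ => Real.exp (-(x / 2)))
      (Real.exp (-(x / 2)) * -(1 / 2)) x := (((hasDerivAt_id x).div_const 2).neg).exp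
  have hc : HasDerivAt (fun x : ℝ => Real.exp (-x)) (Real.exp (-x) * -1) x :=
    ((hasDerivAt_id x).neg).exp
  have hH : HasDerivAt (fun x : ℝ => 2 * Real.exp (-(x / 2)) - Real.exp (-x))
      (2 * (Real.exp (-(x / 2)) * -(1 / 2)) - Real.exp (-x) * -1) x :=
    (hb.const_mul 2).sub hc
  have h5 := (((hasDerivAt_const x (1:ℝ)).sub hg).mul hH).const_sub (2 * (1 - Real.log 2))
  convert h5 using 1
  · rfl
  · rfl
  · rfl
  have hab : Real.exp (x / 2) * Real.exp (-(x / 2)) = 1 := by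
    rw [← Real.exp_add]; norm_num
  have hex : Real.exp (-x) = Real.exp (-(x / 2)) * Real.exp (-(x / 2)) := by
    rw [← Real.exp_add]; ring_nf
  set a := Real.exp (x / 2)
  set b := Real.exp (-(x / 2))
  set L := Real.log 2 + x / 2 - Real.log (2 * a - 1)
  rw [hex]
  unfold gf
  simp only [Pi.sub_apply]
  linear_combination (2 * b * L) * hab

lemma Phi_zero : Phi 0 = 0 := by
  simp [Phi, gf]
  norm_num
  ring

lemma integral_gf {l : ℝ} (hl : 0 ≤ l) :
    ∫ θ in (0:ℝ)..l, Real.exp (-θ) * gf θ = Phi l := by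
  have huIcc : Set.uIcc (0:ℝ) l = Set.Icc 0 l := Set.uIcc_of_le hl
  have hcont : ContinuousOn (fun θ : ℝ => Real.exp (-θ) * gf θ) (Set.uIcc 0 l) := by
    intro t ht
    rw [huIcc] at ht
    exact ((Real.continuous_exp.comp continuous_neg).continuousAt.mul
      (gf_hasDeriv ht.1).continuousAt).continuousWithinAt
  have := intervalIntegral.integral_eq_sub_of_hasDerivAt
    (f := Phi) (f' := fun θ => Real.exp (-θ) * gf θ)
    (fun t ht => Phi_hasDeriv (by rw [huIcc] at ht; exact ht.1))
    (hcont.intervalIntegrable)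
  rw [this, Phi_zero, sub_zero]

lemma dom_integrable : IntegrableOn (fun θ : ℝ => 2 * Real.exp (-(1/2) * θ)) (Set.Ioi 0) :=
  (exp_neg_integrableOn_Ioi 0 (by norm_num : (0:ℝ) < 1/2)).const_mul 2

lemma norm_bound {θ s : ℝ} (hθ : 0 < θ) (hs : s ≤ θ) :
    ‖Real.exp (-θ) * max s 0‖ ≤ 2 * Real.exp (-(1/2) * θ) := by
  have h1 : (0:ℝ) ≤ Real.exp (-θ) * max s 0 := by positivity
  rw [Real.norm_eq_abs, abs_of_nonneg h1]
  have h2 : max s 0 ≤ θ := max_le hs (le_of_lt hθ)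
  have h3 : Real.exp (-θ) * max s 0 ≤ Real.exp (-θ) * θ :=
    mul_le_mul_of_nonneg_left h2 (le_of_lt (Real.exp_pos _))
  refine le_trans h3 ?_
  have h4 : Real.exp (-θ) = Real.exp (-(1/2) * θ) * Real.exp (-(1/2) * θ) := by
    rw [← Real.exp_add]; ring_nf
  have h5 : θ / 2 + 1 ≤ Real.exp (θ / 2) := Real.add_one_le_exp _
  have h6 : Real.exp (-(1/2) * θ) * Real.exp (θ / 2) = 1 := by
    rw [← Real.exp_add]; ring_nf; exact Real.exp_zero
  nlinarith [Real.exp_pos (-(1/2) * θ), Real.exp_pos (θ / 2)]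

lemma integrable_of_le {F : ℝ → ℝ} (hc : Continuous F)
    (hb : ∀ θ ∈ Set.Ioi (0:ℝ), ‖F θ‖ ≤ 2 * Real.exp (-(1/2) * θ)) :
    IntegrableOn F (Set.Ioi 0) := by
  refine dom_integrable.mono' hc.aestronglyMeasurable.restrict ?_
  filter_upwards [ae_restrict_mem measurableSet_Ioi] with θ hθ
  exact hb θ hθ

lemma r_integrable {q : ℝ} (hq : 0 ≤ q) :
    IntegrableOn (fun θ : ℝ => Real.exp (-θ) * max (θ - q) 0) (Set.Ioi 0) := by
  refine integrable_of_le ?_ ?_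
  · fun_prop
  · exact fun θ hθ => norm_bound hθ (by linarith)

lemma integral_r {q : ℝ} (hq : 0 ≤ q) :
    ∫ θ in Set.Ioi (0:ℝ), Real.exp (-θ) * max (θ - q) 0 = Real.exp (-q) := by
  have hsplit : Set.Ioc (0:ℝ) q ∪ Set.Ioi q = Set.Ioi 0 := Set.Ioc_union_Ioi_eq_Ioi hq
  have hint := r_integrable hq
  rw [← hsplit, setIntegral_union (Set.Ioc_disjoint_Ioi le_rfl) measurableSet_Ioi
      (hint.mono_set (by rw [← hsplit]; exact Set.subset_union_left))
      (hint.mono_set (by rw [← hsplit]; exact Set.subset_union_right))]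
  have h1 : ∫ θ in Set.Ioc (0:ℝ) q, Real.exp (-θ) * max (θ - q) 0 = 0 := by
    rw [setIntegral_congr_fun measurableSet_Ioc
      (fun θ hθ => by simp only; rw [max_eq_right (by linarith [hθ.2] : θ - q ≤ 0), mul_zero] :
        Set.EqOn _ (fun _ => (0:ℝ)) _)]
    simp
  have h2 : ∫ θ in Set.Ioi q, Real.exp (-θ) * max (θ - q) 0 = Real.exp (-q) := by
    rw [setIntegral_congr_fun measurableSet_Ioi
      (fun θ hθ => by simp only; rw [max_eq_left (by linarith [Set.mem_Ioi.1 hθ] : (0:ℝ) ≤ θ - q)] :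
        Set.EqOn _ (fun θ => Real.exp (-θ) * (θ - q)) _)]
    have hderiv : ∀ θ ∈ Set.Ioi q, HasDerivAt (fun t : ℝ => -((t - q + 1) * Real.exp (-t)))
        (Real.exp (-θ) * (θ - q)) θ := by
      intro θ _
      have h := ((((hasDerivAt_id θ).sub_const q).add_const 1).mul
        (((hasDerivAt_id θ).neg).exp)).neg
      simp only [id] at h
      convert h using 1
      · rfl
      · rfl
      · rfl
      simp only [Pi.neg_apply, id_eq]
      ring
    have hcont : ContinuousWithinAt (fun t : ℝ => -((t - q + 1) * Real.exp (-t)))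
        (Set.Ici q) q :=
      (by fun_prop : Continuous fun t : ℝ => -((t - q + 1) * Real.exp (-t))).continuousWithinAt
    have hintq : IntegrableOn (fun θ : ℝ => Real.exp (-θ) * (θ - q)) (Set.Ioi q) := by
      refine ((r_integrable hq).mono_set (Set.Ioi_subset_Ioi hq)).congr_fun ?_ measurableSet_Ioi
      intro θ hθ
      simp only
      rw [max_eq_left (by linarith [Set.mem_Ioi.1 hθ] : (0:ℝ) ≤ θ - q)]
    have htend : Filter.Tendsto (fun t : ℝ => -((t - q + 1) * Real.exp (-t)))
        Filter.atTop (nhds 0) := by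
      have h1 := tendsto_pow_mul_exp_neg_atTop_nhds_zero 1
      have h2 := (Real.tendsto_exp_neg_atTop_nhds_zero).const_mul (1 - q)
      have h3 := (h1.add h2).neg
      simp only [neg_zero, add_zero, mul_zero] at h3
      refine h3.congr (fun t => ?_)
      ring
    rw [integral_Ioi_of_hasDerivAt_of_tendsto hcont hderiv hintq htend]
    simp
  rw [h1, h2, zero_add]

lemma p_integrable {l : ℝ} (hl : 0 ≤ l) :
    IntegrableOn (fun θ : ℝ => Real.exp (-θ) * max (θ - max (l - θ) 0) 0) (Set.Ioi 0) := by
  refine integrable_of_le (by fun_prop) ?_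
  exact fun θ hθ => norm_bound hθ (by linarith [le_max_right (l - θ) 0])

lemma integral_p {l : ℝ} (hl : 0 ≤ l) :
    ∫ θ in Set.Ioi (0:ℝ), Real.exp (-θ) * max (θ - max (l - θ) 0) 0
      = 2 * Real.exp (-(l / 2)) - Real.exp (-l) := by
  have hsplit : Set.Ioc (0:ℝ) l ∪ Set.Ioi l = Set.Ioi 0 := Set.Ioc_union_Ioi_eq_Ioi hl
  have hint := p_integrable hl
  rw [← hsplit, setIntegral_union (Set.Ioc_disjoint_Ioi le_rfl) measurableSet_Ioi
      (hint.mono_set (by rw [← hsplit]; exact Set.subset_union_left))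
      (hint.mono_set (by rw [← hsplit]; exact Set.subset_union_right))]
  have h2 : ∫ θ in Set.Ioi l, Real.exp (-θ) * max (θ - max (l - θ) 0) 0
      = (l + 1) * Real.exp (-l) := by
    rw [setIntegral_congr_fun measurableSet_Ioi
      (fun θ hθ => by
        have h := Set.mem_Ioi.1 hθ
        simp only
        rw [max_eq_right (by linarith : l - θ ≤ 0), sub_zero,
          max_eq_left (by linarith : (0:ℝ) ≤ θ)] :
        Set.EqOn _ (fun θ => Real.exp (-θ) * θ) _)]
    have hderiv : ∀ θ ∈ Set.Ioi l, HasDerivAt (fun t : ℝ => -((t + 1) * Real.exp (-t)))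
        (Real.exp (-θ) * θ) θ := by
      intro θ _
      have h := (((hasDerivAt_id θ).add_const 1).mul (((hasDerivAt_id θ).neg).exp)).neg
      simp only [id] at h
      convert h using 1
      · rfl
      · rfl
      · rfl
      simp only [Pi.neg_apply, id_eq]
      ring
    have hintl : IntegrableOn (fun θ : ℝ => Real.exp (-θ) * θ) (Set.Ioi l) := by
      refine ((p_integrable hl).mono_set (Set.Ioi_subset_Ioi hl)).congr_fun ?_ measurableSet_Ioi
      intro θ hθ
      have h := Set.mem_Ioi.1 hθ
      simp only
      rw [max_eq_right (by linarith : l - θ ≤ 0), sub_zero,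
        max_eq_left (by linarith : (0:ℝ) ≤ θ)]
    have htend : Filter.Tendsto (fun t : ℝ => -((t + 1) * Real.exp (-t)))
        Filter.atTop (nhds 0) := by
      have h1 := tendsto_pow_mul_exp_neg_atTop_nhds_zero 1
      have h2 := Real.tendsto_exp_neg_atTop_nhds_zero
      have h3 := (h1.add h2).neg
      simp only [neg_zero, add_zero] at h3
      refine h3.congr (fun t => ?_)
      ring
    rw [integral_Ioi_of_hasDerivAt_of_tendsto
      ((by fun_prop : Continuous fun t : ℝ => -((t + 1) * Real.exp (-t))).continuousWithinAt)
      hderiv hintl htend]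
    ring
  have h1 : ∫ θ in Set.Ioc (0:ℝ) l, Real.exp (-θ) * max (θ - max (l - θ) 0) 0
      = 2 * Real.exp (-(l / 2)) - (l + 2) * Real.exp (-l) := by
    rw [← intervalIntegral.integral_of_le hl]
    have hmid : l / 2 ∈ Set.uIcc (0:ℝ) l := by
      rw [Set.uIcc_of_le hl]; constructor <;> linarith
    have hii : ∀ a b : ℝ, a ∈ Set.uIcc (0:ℝ) l → b ∈ Set.uIcc (0:ℝ) l →
        IntervalIntegrable (fun θ : ℝ => Real.exp (-θ) * max (θ - max (l - θ) 0) 0) volume a b :=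
      fun a b _ _ => (by fun_prop :
        Continuous fun θ : ℝ => Real.exp (-θ) * max (θ - max (l - θ) 0) 0).intervalIntegrable a b
    rw [← intervalIntegral.integral_add_adjacent_intervals
      (hii 0 (l/2) (Set.left_mem_uIcc) hmid) (hii (l/2) l hmid (Set.right_mem_uIcc))]
    have e1 : ∫ θ in (0:ℝ)..(l/2), Real.exp (-θ) * max (θ - max (l - θ) 0) 0 = 0 := by
      rw [intervalIntegral.integral_congr (g := fun _ => (0:ℝ))
        (fun θ hθ => by
          rw [Set.uIcc_of_le (by linarith : (0:ℝ) ≤ l/2)] at hθ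
          simp only
          rw [max_eq_left (by linarith [hθ.2] : (0:ℝ) ≤ l - θ),
            max_eq_right (by linarith [hθ.2] : θ - (l - θ) ≤ 0), mul_zero])]
      simp
    have e2 : ∫ θ in (l/2)..l, Real.exp (-θ) * max (θ - max (l - θ) 0) 0
        = 2 * Real.exp (-(l / 2)) - (l + 2) * Real.exp (-l) := by
      rw [intervalIntegral.integral_congr (g := fun θ => Real.exp (-θ) * (2 * θ - l))
        (fun θ hθ => by
          rw [Set.uIcc_of_le (by linarith : l/2 ≤ l)] at hθ
          simp only
          rw [max_eq_left (by linarith [hθ.2] : (0:ℝ) ≤ l - θ),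
            max_eq_left (by linarith [hθ.1] : (0:ℝ) ≤ θ - (l - θ))]
          ring_nf)]
      have hderiv : ∀ θ ∈ Set.uIcc (l/2) l,
          HasDerivAt (fun t : ℝ => -((2 * t - l + 2) * Real.exp (-t)))
          (Real.exp (-θ) * (2 * θ - l)) θ := by
        intro θ _
        have h := ((((hasDerivAt_id θ).const_mul 2).sub_const l |>.add_const 2).mul
          (((hasDerivAt_id θ).neg).exp)).neg
        simp only [id] at h
        convert h using 1
        · rfl
        · rfl
        · rfl
        simp only [Pi.neg_apply, id_eq]
        ring
      rw [intervalIntegral.integral_eq_sub_of_hasDerivAt hderiv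
        ((by fun_prop : Continuous fun θ : ℝ =>
          Real.exp (-θ) * (2 * θ - l)).continuousOn.intervalIntegrable)]
      ring_nf
    rw [e1, e2, zero_add]
  rw [h1, h2]
  ring

lemma max_sub_le_max (A D : ℝ) (hD : 0 ≤ D) : max A 0 - D ≤ max (A - D) 0 := by
  rcases le_total A D with h | h
  · have : max A 0 ≤ D := max_le h hD
    linarith [le_max_right (A - D) 0]
  · have : A - D ≤ max (A - D) 0 := le_max_left _ _
    have hA : max A 0 = A := max_eq_left (le_trans hD h)
    linarith

lemma theta_sub_min (θ q : ℝ) : θ - min q θ = max (θ - q) 0 := by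
  rcases le_total q θ with h | h
  · rw [min_eq_left h, max_eq_left (by linarith)]
  · rw [min_eq_right h, max_eq_right (by linarith)]; ring

/-- There is a nondecreasing gain-splitting function `g : [0,∞) → [0,1]`
certifying the competitive ratio `2(1 - ln 2)` of Stochastic Balance with
equal infinitesimal success probabilities. -/
theorem exists_gain_splitting_equal_prob :
    ∃ g : ℝ → ℝ, MonotoneOn g (Set.Ici 0) ∧
      (∀ x ∈ Set.Ici (0 : ℝ), g x ∈ Set.Icc (0 : ℝ) 1) ∧
      ∀ ℓ ≥ (0 : ℝ), ∀ q ≥ (0 : ℝ),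
        (∫ θ in (0 : ℝ)..ℓ, Real.exp (-θ) * g θ)
          + (1 - g ℓ) *
            ∫ θ in Set.Ioi (0 : ℝ),
              Real.exp (-θ) * max (min q θ - max (ℓ - θ) 0) 0
        ≥ 2 * (1 - Real.log 2) * (1 - Real.exp (-q)) := by
  refine ⟨gf, gf_mono, fun x hx => gf_mem hx, ?_⟩
  intro l hl q hq
  rw [integral_gf hl]
  have hf_int : IntegrableOn
      (fun θ : ℝ => Real.exp (-θ) * max (min q θ - max (l - θ) 0) 0) (Set.Ioi 0) := by
    refine integrable_of_le (by fun_prop) ?_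
    exact fun θ hθ => norm_bound hθ
      (by linarith [le_max_right (l - θ) 0, min_le_right q θ])
  have hp := p_integrable hl
  have hr := r_integrable hq
  have hmono := setIntegral_mono_on (hp.sub hr) hf_int measurableSet_Ioi ?_
  swap
  · intro θ hθ
    simp only [Pi.sub_apply]
    have h1 : max (θ - max (l - θ) 0) 0 - max (θ - q) 0
        ≤ max (min q θ - max (l - θ) 0) 0 := by
      have h := max_sub_le_max (θ - max (l - θ) 0) (max (θ - q) 0) (le_max_right _ _)
      have h2 : θ - max (l - θ) 0 - max (θ - q) 0 = min q θ - max (l - θ) 0 := by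
        rw [← theta_sub_min θ q]; ring
      rwa [h2] at h
    nlinarith [Real.exp_pos (-θ)]
  simp only [Pi.sub_apply] at hmono
  rw [integral_sub hp hr, integral_p hl, integral_r hq] at hmono
  set I2 := ∫ θ in Set.Ioi (0:ℝ), Real.exp (-θ) * max (min q θ - max (l - θ) 0) 0
  have hg1 : gf l ≤ 1 := gf_le_one hl
  have hg0 := gf_lower hl
  have hmul : (1 - gf l) * ((2 * Real.exp (-(l / 2)) - Real.exp (-l)) - Real.exp (-q))
      ≤ (1 - gf l) * I2 := mul_le_mul_of_nonneg_left hmono (by linarith)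
  have hexpq := Real.exp_pos (-q)
  have hPhi : Phi l = 2 * (1 - Real.log 2)
      - (1 - gf l) * (2 * Real.exp (-(l / 2)) - Real.exp (-l)) := rfl
  nlinarith [mul_le_mul_of_nonneg_right hg0 (le_of_lt hexpq)]
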